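/- If for each episode k and each state-action pair the per-episode visit counts satisfy the doubling-stop rule (each episode ends the first time some pair's within-episode count v_k reaches its prior count n_k, with n_k ≥ 1), then the total number of episodes m over a horizon of T steps satisfies m ≤ C·A·log₂(8T/(C·A)), where C·A is the number of state-action pairs. -/

import Mathlib

set_option maxHeartbeats 1600000 in
theorem stmt_17 (CA T m : ℕ) (hCA : 1 ≤ CA) (hT : CA ≤ T)
    (v : ℕ → Fin CA → ℕ) (n : ℕ → Fin CA → ℕ)
    (hn : ∀ k p, n k p = max 1 (∑ j ∈ Finset.Ico 1 k, v j p))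
    (hstop : ∀ k ∈ Finset.Icc 1 m, (∀ p, v k p ≤ n k p) ∧ ∃ p, v k p = n k p)
    (htotal : ∑ k ∈ Finset.Icc 1 m, ∑ p, v k p ≤ T) :
    (m : ℝ) ≤ CA * Real.logb 2 (8 * T / CA) := by
  have hT1 : 1 ≤ T := le_trans hCA hT
  have hTR : (0:ℝ) < T := by exact_mod_cast hT1
  have hCAR : (0:ℝ) < CA := by exact_mod_cast hCA
  have hCATR : (CA:ℝ) ≤ T := by exact_mod_cast hT
  have hdiv8 : (8:ℝ) ≤ 8 * T / CA := by
    rw [le_div_iff₀ hCAR]; nlinarith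
  have hlog1 : (1:ℝ) ≤ Real.log (8 * T / CA) := by
    rw [Real.le_log_iff_exp_le (by linarith)]
    have := Real.exp_one_lt_d9
    linarith
  have hlogb_nonneg : 0 ≤ Real.logb 2 (8 * T / CA) := by
    apply Real.logb_nonneg one_lt_two; linarith
  rcases Nat.eq_zero_or_pos m with hm0 | hm
  · rw [hm0]; push_cast; positivity
  -- choose a trigger pair for each episode
  obtain ⟨ch, hch⟩ : ∃ ch : ℕ → Fin CA, ∀ k ∈ Finset.Icc 1 m, v k (ch k) = n k (ch k) := by
    have h : ∀ k : ℕ, ∃ p, k ∈ Finset.Icc 1 m → v k p = n k p := by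
      intro k
      by_cases h : k ∈ Finset.Icc 1 m
      · obtain ⟨p, hp⟩ := (hstop k h).2
        exact ⟨p, fun _ => hp⟩
      · exact ⟨⟨0, hCA⟩, fun h' => absurd h' h⟩
    choose ch h using h
    exact ⟨ch, h⟩
  have hins : ∀ k : ℕ, Finset.Icc 1 (k+1) = insert (k+1) (Finset.Icc 1 k) := by
    intro k
    ext x; simp only [Finset.mem_Icc, Finset.mem_insert]; omega
  -- key doubling lemma
  have key : ∀ k, k ≤ m → ∀ p : Fin CA,
      1 ≤ ((Finset.Icc 1 k).filter (fun j => ch j = p)).card →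
      2 ^ ((Finset.Icc 1 k).filter (fun j => ch j = p)).card ≤ 2 * ∑ j ∈ Finset.Icc 1 k, v j p := by
    intro k
    induction k with
    | zero => intro _ p h; simp at h
    | succ k ih =>
      intro hkm p hcnt
      have hk1 : k + 1 ∉ Finset.Icc 1 k := by simp
      have hsum : ∑ j ∈ Finset.Icc 1 (k+1), v j p
          = v (k+1) p + ∑ j ∈ Finset.Icc 1 k, v j p := by
        rw [hins k, Finset.sum_insert hk1]
      by_cases hc : ch (k+1) = p
      · -- trigger episode
        have hmem : k + 1 ∈ Finset.Icc 1 m := Finset.mem_Icc.mpr ⟨by omega, by omega⟩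
        have hv : v (k+1) p = max 1 (∑ j ∈ Finset.Icc 1 k, v j p) := by
          rw [← hc, hch (k+1) hmem, hn, ← Finset.Ico_add_one_right_eq_Icc]
        have hcard : ((Finset.Icc 1 (k+1)).filter (fun j => ch j = p)).card
            = ((Finset.Icc 1 k).filter (fun j => ch j = p)).card + 1 := by
          rw [hins k, Finset.filter_insert, if_pos hc,
            Finset.card_insert_of_notMem (fun h => hk1 (Finset.mem_of_mem_filter _ h))]
        rw [hcard, hsum, hv]
        set c := ((Finset.Icc 1 k).filter (fun j => ch j = p)).card with hcdef
        set s0 := ∑ j ∈ Finset.Icc 1 k, v j p with hs0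
        rcases Nat.eq_zero_or_pos c with hc0 | hc1
        · rw [hc0, zero_add, pow_one]
          have : 1 ≤ max 1 s0 := le_max_left _ _
          omega
        · have hIH : 2 ^ c ≤ 2 * s0 := ih (by omega) p hc1
          have h2c : 2 ≤ 2 ^ c := by
            calc 2 = 2 ^ 1 := rfl
            _ ≤ 2 ^ c := Nat.pow_le_pow_right (by norm_num) hc1
          have hs1 : 1 ≤ s0 := by omega
          have : max 1 s0 = s0 := max_eq_right hs1
          rw [this, pow_succ]
          omega
      · -- non-trigger episode
        have hcard : ((Finset.Icc 1 (k+1)).filter (fun j => ch j = p)).card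
            = ((Finset.Icc 1 k).filter (fun j => ch j = p)).card := by
          rw [hins k, Finset.filter_insert, if_neg hc]
        rw [hcard] at hcnt ⊢
        have hIH := ih (by omega) p hcnt
        rw [hsum]
        omega
  -- global counts
  set K : Fin CA → ℕ := fun p => ((Finset.Icc 1 m).filter (fun j => ch j = p)).card with hK
  set N : Fin CA → ℕ := fun p => ∑ j ∈ Finset.Icc 1 m, v j p with hN
  have hsumK : ∑ p : Fin CA, K p = m := by
    have := Finset.card_eq_sum_card_fiberwise
      (f := ch) (s := Finset.Icc 1 m) (t := Finset.univ) (fun x _ => Finset.mem_univ (ch x))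
    rw [Nat.card_Icc] at this
    simp only [hK]
    omega
  have hNT : ∑ p : Fin CA, N p ≤ T := by
    rw [Finset.sum_comm] at htotal
    exact htotal
  set S : Finset (Fin CA) := Finset.univ.filter (fun p => 1 ≤ K p) with hS
  have hmS : ∑ p ∈ S, K p = m := by
    rw [hS, Finset.sum_filter_of_ne (fun x _ hx => by omega)]
    exact hsumK
  set s : ℕ := S.card with hs
  have hs1 : 1 ≤ s := by
    rcases Finset.eq_empty_or_nonempty S with he | hne
    · rw [he] at hmS; simp at hmS; omega
    · exact Finset.card_pos.mpr hne
  have hsR : (0:ℝ) < s := by exact_mod_cast hs1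
  have hsCA : (s:ℝ) ≤ CA := by
    have : S.card ≤ Finset.univ.card := Finset.card_le_card (Finset.filter_subset _ _)
    simpa using this
  have key2 : ∀ p ∈ S, 2 ^ K p ≤ 2 * N p := by
    intro p hp
    exact key m le_rfl p (by simpa [hS, hK] using (Finset.mem_filter.mp hp).2)
  have hNS : ∑ p ∈ S, (N p : ℝ) ≤ T := by
    have h1 : ∑ p ∈ S, N p ≤ ∑ p : Fin CA, N p :=
      Finset.sum_le_sum_of_subset (Finset.filter_subset _ _)
    have := le_trans h1 hNT
    push_cast
    exact_mod_cast this
  have hNp1 : ∀ p ∈ S, (1:ℝ) ≤ N p := by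
    intro p hp
    have h2 := key2 p hp
    have hKp : 1 ≤ K p := (Finset.mem_filter.mp hp).2
    have : 2 ≤ 2 ^ K p := by
      calc 2 = 2 ^ 1 := rfl
      _ ≤ 2 ^ K p := Nat.pow_le_pow_right (by norm_num) hKp
    have : 1 ≤ N p := by omega
    exact_mod_cast this
  have hlog2 : (0:ℝ) < Real.log 2 := Real.log_pos one_lt_two
  -- Step A
  have hA : ∀ p ∈ S, (K p : ℝ) * Real.log 2 ≤ Real.log (2 * N p) := by
    intro p hp
    have h2 : (2:ℝ) ^ K p ≤ 2 * N p := by exact_mod_cast key2 p hp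
    calc (K p : ℝ) * Real.log 2 = Real.log (2 ^ K p) := (Real.log_pow _ _).symm
      _ ≤ Real.log (2 * N p) := Real.log_le_log (by positivity) h2
  -- Step B
  have hB : (m:ℝ) * Real.log 2 ≤ ∑ p ∈ S, Real.log (2 * N p) := by
    have : (m:ℝ) = ∑ p ∈ S, (K p : ℝ) := by exact_mod_cast hmS.symm
    rw [this, Finset.sum_mul]
    exact Finset.sum_le_sum hA
  -- Step C
  have hC : ∑ p ∈ S, Real.log (2 * N p) ≤ s * Real.log (2 * T / s) := by
    have hterm : ∀ p ∈ S, Real.log (2 * N p)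
        ≤ Real.log (2 * T / s) + ((N p : ℝ) * s / T - 1) := by
      intro p hp
      have hNp := hNp1 p hp
      have heq : Real.log (2 * (N p : ℝ)) = Real.log (2 * T / s) + Real.log ((N p : ℝ) * s / T) := by
        rw [← Real.log_mul (by positivity) (by positivity)]
        congr 1
        field_simp
      rw [heq]
      exact add_le_add_right (Real.log_le_sub_one_of_pos (by positivity)) _
    calc ∑ p ∈ S, Real.log (2 * N p)
        ≤ ∑ p ∈ S, (Real.log (2 * T / s) + ((N p : ℝ) * s / T - 1)) :=
          Finset.sum_le_sum hterm
      _ = s * Real.log (2 * T / s) + ((∑ p ∈ S, (N p : ℝ)) * s / T - s) := by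
          rw [Finset.sum_add_distrib, Finset.sum_const, Finset.sum_sub_distrib,
            Finset.sum_const, ← Finset.sum_div, ← Finset.sum_mul]
          push_cast
          ring
      _ ≤ s * Real.log (2 * T / s) := by
          have h1 : (∑ p ∈ S, (N p : ℝ)) * s / T ≤ s := by
            rw [div_le_iff₀ hTR]
            nlinarith [hNS, hsR.le]
          linarith
  -- Step D
  have hD : (s:ℝ) * Real.log (2 * T / s) ≤ s * Real.log (8 * T / s) := by
    apply mul_le_mul_of_nonneg_left _ hsR.le
    apply Real.log_le_log (by positivity)
    apply div_le_div_of_nonneg_right (by linarith : (2:ℝ)*T ≤ 8*T) hsR.le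
  -- Step E
  have hE : (s:ℝ) * Real.log (8 * T / s) ≤ CA * Real.log (8 * T / CA) := by
    have hsplit : Real.log (8 * (T:ℝ) / s) = Real.log (8 * T / CA) + Real.log ((CA:ℝ) / s) := by
      rw [← Real.log_mul (by positivity) (by positivity)]
      congr 1
      field_simp
    have hlncs : Real.log ((CA:ℝ) / s) ≤ (CA:ℝ) / s - 1 :=
      Real.log_le_sub_one_of_pos (by positivity)
    have hid : (s:ℝ) * ((CA:ℝ) / s) = CA := by field_simp
    calc (s:ℝ) * Real.log (8 * T / s)
        = s * Real.log (8 * T / CA) + s * Real.log ((CA:ℝ) / s) := by rw [hsplit]; ring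
      _ ≤ s * Real.log (8 * T / CA) + s * ((CA:ℝ) / s - 1) := by
          exact add_le_add_right (mul_le_mul_of_nonneg_left hlncs hsR.le) _
      _ = s * Real.log (8 * T / CA) + ((CA:ℝ) - s) := by rw [mul_sub, hid]; ring
      _ ≤ s * Real.log (8 * T / CA) + ((CA:ℝ) - s) * Real.log (8 * T / CA) := by
          have h1 : ((CA:ℝ) - s) * 1 ≤ ((CA:ℝ) - s) * Real.log (8 * T / CA) :=
            mul_le_mul_of_nonneg_left hlog1 (by linarith)
          linarith
      _ = CA * Real.log (8 * T / CA) := by ring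
  -- conclude
  have hfinal : (m:ℝ) * Real.log 2 ≤ CA * Real.log (8 * T / CA) := by
    calc (m:ℝ) * Real.log 2 ≤ ∑ p ∈ S, Real.log (2 * N p) := hB
      _ ≤ s * Real.log (2 * T / s) := hC
      _ ≤ s * Real.log (8 * T / s) := hD
      _ ≤ CA * Real.log (8 * T / CA) := hE
  rw [Real.logb, mul_div_assoc', le_div_iff₀ hlog2]
  linarith
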